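/- For points x¹, x², x³, x⁴ ∈ 𝒳 = (𝕊¹)^m × ℝⁿ, the combined second-order absolute differences are bounded by first-order ones: D₂(x¹,x²,x³) ≤ d_𝒳(x¹,x²) + d_𝒳(x²,x³), and D₁,₁(x¹,x²,x³,x⁴) ≤ d_𝒳(x¹,x²) + d_𝒳(x³,x⁴). -/

import Mathlib

noncomputable section

/-- `(t)_{2π}`: the unique element of `[-π, π)` with `t - (t)_{2π} ∈ 2πℤ`. -/
def wrap (t : ℝ) : ℝ := t - 2 * Real.pi * (⌊(t + Real.pi) / (2 * Real.pi)⌋ : ℤ)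

/-- A point of `𝒳 = (𝕊¹)^m × ℝⁿ`, identified with `[-π,π)^m × ℝⁿ`. -/
abbrev Pt (m n : ℕ) := (Fin m → ℝ) × (Fin n → ℝ)

/-- Distance on `𝒳`. -/
def dX {m n : ℕ} (x y : Pt m n) : ℝ :=
  Real.sqrt ((∑ i, (wrap (x.1 i - y.1 i)) ^ 2) + ∑ i, (x.2 i - y.2 i) ^ 2)

/-- Combined absolute finite difference of `x ∈ 𝒳^d` with respect to the weight `w`. -/
def Dw {m n : ℕ} (d : ℕ) (w : Fin d → ℝ) (x : Fin d → Pt m n) : ℝ :=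
  Real.sqrt
    ((sInf {r : ℝ | ∃ k : Fin m → Fin d → ℤ,
        r = ∑ i, (∑ j, ((x j).1 i + 2 * Real.pi * (k i j : ℝ)) * w j) ^ 2}) +
      ∑ i, (∑ j, (x j).2 i * w j) ^ 2)

lemma key_tri (m n : ℕ) (u v : Fin m → ℝ) (p q : Fin n → ℝ) :
    Real.sqrt ((∑ i, (u i + v i) ^ 2) + ∑ i, (p i + q i) ^ 2) ≤
      Real.sqrt ((∑ i, (u i) ^ 2) + ∑ i, (p i) ^ 2) +
      Real.sqrt ((∑ i, (v i) ^ 2) + ∑ i, (q i) ^ 2) := by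
  let F : EuclideanSpace ℝ (Fin m ⊕ Fin n) := WithLp.toLp 2 (Sum.elim u p)
  let G : EuclideanSpace ℝ (Fin m ⊕ Fin n) := WithLp.toLp 2 (Sum.elim v q)
  have h := norm_add_le F G
  have hn : ∀ z : EuclideanSpace ℝ (Fin m ⊕ Fin n),
      ‖z‖ = Real.sqrt ((∑ i, (z (Sum.inl i)) ^ 2) + ∑ i, (z (Sum.inr i)) ^ 2) := by
    intro z
    rw [EuclideanSpace.norm_eq]
    congr 1
    rw [Fintype.sum_sum_type]
    simp [sq_abs]
  have hFG : ∀ i, (F + G) i = Sum.elim (fun i => u i + v i) (fun i => p i + q i) i := by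
    intro i; cases i <;> simp [F, G]
  rw [hn F, hn G, hn (F + G)] at h
  simpa [F, G, hFG] using h

/-- Second order combined absolute differences are bounded by sums of first order
distances: `D₂(x¹,x²,x³) ≤ d_𝒳(x¹,x²) + d_𝒳(x²,x³)` and
`D₁,₁(x¹,x²,x³,x⁴) ≤ d_𝒳(x¹,x²) + d_𝒳(x³,x⁴)`. -/
theorem second_order_differences_le_first_order
    (m n : ℕ) (x1 x2 x3 x4 : Pt m n)
    (h1 : ∀ i, x1.1 i ∈ Set.Ico (-Real.pi) Real.pi)
    (h2 : ∀ i, x2.1 i ∈ Set.Ico (-Real.pi) Real.pi)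
    (h3 : ∀ i, x3.1 i ∈ Set.Ico (-Real.pi) Real.pi)
    (h4 : ∀ i, x4.1 i ∈ Set.Ico (-Real.pi) Real.pi) :
    Dw 3 ![(1 : ℝ), -2, 1] ![x1, x2, x3] ≤ dX x1 x2 + dX x2 x3 ∧
    Dw 4 ![(-1 : ℝ), 1, 1, -1] ![x1, x2, x3, x4] ≤ dX x1 x2 + dX x3 x4 := by
  constructor
  · have hb : BddBelow {r : ℝ | ∃ k : Fin m → Fin 3 → ℤ,
        r = ∑ i, (∑ j, ((![x1,x2,x3] j).1 i + 2 * Real.pi * (k i j : ℝ)) * ![(1:ℝ),-2,1] j) ^ 2} := by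
      refine ⟨0, ?_⟩; rintro r ⟨k, rfl⟩; positivity
    have hmem : (∑ i, (wrap (x1.1 i - x2.1 i) + -(wrap (x2.1 i - x3.1 i))) ^ 2)
        ∈ {r : ℝ | ∃ k : Fin m → Fin 3 → ℤ,
        r = ∑ i, (∑ j, ((![x1,x2,x3] j).1 i + 2 * Real.pi * (k i j : ℝ)) * ![(1:ℝ),-2,1] j) ^ 2} := by
      refine ⟨fun i => ![-(⌊(x1.1 i - x2.1 i + Real.pi) / (2 * Real.pi)⌋),
        0, ⌊(x2.1 i - x3.1 i + Real.pi) / (2 * Real.pi)⌋], Finset.sum_congr rfl fun i _ => ?_⟩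
      simp only [Fin.sum_univ_three, Matrix.cons_val_zero, Matrix.cons_val_one, Matrix.head_cons,
        Matrix.cons_val_two, Matrix.tail_cons, wrap]
      push_cast
      ring
    have hlin : (∑ i, (∑ j, ((![x1,x2,x3] j).2 i * ![(1:ℝ),-2,1] j)) ^ 2)
        = ∑ i, ((x1.2 i - x2.2 i) + -(x2.2 i - x3.2 i)) ^ 2 := by
      refine Finset.sum_congr rfl fun i _ => ?_
      simp only [Fin.sum_univ_three, Matrix.cons_val_zero, Matrix.cons_val_one, Matrix.head_cons,
        Matrix.cons_val_two, Matrix.tail_cons]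
      ring
    have h0 : Dw 3 ![(1:ℝ),-2,1] ![x1,x2,x3] ≤ Real.sqrt
        ((∑ i, (wrap (x1.1 i - x2.1 i) + -(wrap (x2.1 i - x3.1 i))) ^ 2) +
          ∑ i, ((x1.2 i - x2.2 i) + -(x2.2 i - x3.2 i)) ^ 2) := by
      unfold Dw
      apply Real.sqrt_le_sqrt
      exact add_le_add (csInf_le hb hmem) (le_of_eq hlin)
    refine h0.trans ((key_tri m n _ _ _ _).trans (le_of_eq ?_))
    simp only [dX, neg_sq]
  · have hb : BddBelow {r : ℝ | ∃ k : Fin m → Fin 4 → ℤ,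
        r = ∑ i, (∑ j, ((![x1,x2,x3,x4] j).1 i + 2 * Real.pi * (k i j : ℝ)) * ![(-1:ℝ),1,1,-1] j) ^ 2} := by
      refine ⟨0, ?_⟩; rintro r ⟨k, rfl⟩; positivity
    have hmem : (∑ i, (-(wrap (x1.1 i - x2.1 i)) + wrap (x3.1 i - x4.1 i)) ^ 2)
        ∈ {r : ℝ | ∃ k : Fin m → Fin 4 → ℤ,
        r = ∑ i, (∑ j, ((![x1,x2,x3,x4] j).1 i + 2 * Real.pi * (k i j : ℝ)) * ![(-1:ℝ),1,1,-1] j) ^ 2} := by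
      refine ⟨fun i => ![-(⌊(x1.1 i - x2.1 i + Real.pi) / (2 * Real.pi)⌋),
        0, 0, ⌊(x3.1 i - x4.1 i + Real.pi) / (2 * Real.pi)⌋], Finset.sum_congr rfl fun i _ => ?_⟩
      simp only [Fin.sum_univ_four, Matrix.cons_val_zero, Matrix.cons_val_one, Matrix.head_cons,
        Matrix.cons_val_two, Matrix.tail_cons, Matrix.cons_val_three, wrap]
      push_cast
      ring
    have hlin : (∑ i, (∑ j, ((![x1,x2,x3,x4] j).2 i * ![(-1:ℝ),1,1,-1] j)) ^ 2)
        = ∑ i, (-(x1.2 i - x2.2 i) + (x3.2 i - x4.2 i)) ^ 2 := by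
      refine Finset.sum_congr rfl fun i _ => ?_
      simp only [Fin.sum_univ_four, Matrix.cons_val_zero, Matrix.cons_val_one, Matrix.head_cons,
        Matrix.cons_val_two, Matrix.tail_cons, Matrix.cons_val_three]
      ring
    have h0 : Dw 4 ![(-1:ℝ),1,1,-1] ![x1,x2,x3,x4] ≤ Real.sqrt
        ((∑ i, (-(wrap (x1.1 i - x2.1 i)) + wrap (x3.1 i - x4.1 i)) ^ 2) +
          ∑ i, (-(x1.2 i - x2.2 i) + (x3.2 i - x4.2 i)) ^ 2) := by
      unfold Dw
      apply Real.sqrt_le_sqrt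
      exact add_le_add (csInf_le hb hmem) (le_of_eq hlin)
    refine h0.trans ((key_tri m n _ _ _ _).trans (le_of_eq ?_))
    simp only [dX, neg_sq]
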